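/- arXiv:1305.4401 — 7 statements merged into one kernel-verified Lean document; each statement's English description precedes it below -/
import Mathlib

section
/- Let G be a group, f an endomorphism of G, and a ∈ G a fixed element. The binary operation x * y = f(x)⁻¹ · a · f(y) · x satisfies the left self-distributivity law for all x, y, z ∈ G if and only if a commutes with f(f(x)) for all x ∈ G and a satisfies the braid relation a·f(a)·a = f(a)·a·f(a). -/
theorem stmt4 (G : Type*) [Group G] (f : G →* G) (a : G) :
    (∀ x y z : G,
      (fun x y : G => (f x)⁻¹ * a * f y * x) x ((fun x y : G => (f x)⁻¹ * a * f y * x) y z) =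
      (fun x y : G => (f x)⁻¹ * a * f y * x) ((fun x y : G => (f x)⁻¹ * a * f y * x) x y)
        ((fun x y : G => (f x)⁻¹ * a * f y * x) x z)) ↔
    ((∀ x : G, a * f (f x) = f (f x) * a) ∧ a * f a * a = f a * a * f a) := by
  constructor
  · intro h
    have key : ∀ x : G,
        a * (f a * x) = (f a)⁻¹ * (f (f x) * (a * ((f (f x))⁻¹ * (f a * (a * x))))) := by
      intro x
      have := h x 1 1
      simp only [map_one, map_mul, map_inv, mul_one, one_mul, inv_one, mul_inv_rev, inv_inv,
        mul_assoc, inv_mul_cancel_left, mul_inv_cancel_left, mul_left_cancel_iff] at this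
      exact this
    have hb : a * f a * a = f a * a * f a := by
      have h1 := key 1
      simp only [map_one, mul_one, inv_one, one_mul] at h1
      rw [eq_inv_mul_iff_mul_eq] at h1
      simp only [← mul_assoc] at h1
      exact h1.symm
    refine ⟨fun x => ?_, hb⟩
    have h1 := key x
    rw [eq_inv_mul_iff_mul_eq] at h1
    simp only [← mul_assoc] at h1
    rw [← hb] at h1
    have e2 := mul_right_cancel (mul_right_cancel (mul_right_cancel h1))
    rw [eq_mul_inv_iff_mul_eq] at e2
    exact e2
  · rintro ⟨hc, hb⟩
    intro x y z
    have hc' : ∀ t : G, a * (f (f t))⁻¹ = (f (f t))⁻¹ * a := fun t =>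
      (Commute.inv_right (hc t)).eq
    simp only [map_mul, map_inv, mul_inv_rev, inv_inv, mul_assoc, inv_mul_cancel_left,
      mul_inv_cancel_left]
    rw [← mul_assoc a, hc' y, mul_assoc, mul_left_cancel_iff, mul_left_cancel_iff,
      ← mul_assoc a (f (f x))⁻¹, hc' x, mul_assoc, mul_inv_cancel_left,
      eq_inv_mul_iff_mul_eq, ← mul_assoc (f (f z)) a, ← hc z]
    simp only [← mul_assoc]
    rw [hb]
end

section
/- Let G be a group, f an endomorphism of G, and a ∈ G with a·f(a)·a = f(a)·a·f(a) and a commuting with the image of f∘f. Suppose also that the operation x * y = f(x)⁻¹·a·f(y)·x yields an LD-system (which follows from the stated hypotheses). Then the elements aₙ := fⁿ(a) (n ≥ 0) satisfy the braid relations: aᵢ·aⱼ = aⱼ·aᵢ whenever |i − j| ≥ 2, and aᵢ·aⱼ·aᵢ = aⱼ·aᵢ·aⱼ whenever |i − j| = 1. -/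
private lemma iter_mul {G : Type*} [Group G] (f : G →* G) (n : ℕ) (x y : G) :
    (⇑f)^[n] (x * y) = (⇑f)^[n] x * (⇑f)^[n] y := by
  induction n with
  | zero => simp
  | succ n ih => simp [Function.iterate_succ_apply', ih]

theorem stmt6 (G : Type*) [Group G] (f : G →* G) (a : G)
    (hbraid : a * f a * a = f a * a * f a)
    (hcomm : ∀ x : G, a * f (f x) = f (f x) * a)
    (hLD : ∀ x y z : G,
      (fun x y : G => (f x)⁻¹ * a * f y * x) x ((fun x y : G => (f x)⁻¹ * a * f y * x) y z) =
      (fun x y : G => (f x)⁻¹ * a * f y * x) ((fun x y : G => (f x)⁻¹ * a * f y * x) x y)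
        ((fun x y : G => (f x)⁻¹ * a * f y * x) x z)) :
    (∀ i j : ℕ, (i + 2 ≤ j ∨ j + 2 ≤ i) →
      (f^[i]) a * (f^[j]) a = (f^[j]) a * (f^[i]) a) ∧
    (∀ i j : ℕ, (j = i + 1 ∨ i = j + 1) →
      (f^[i]) a * (f^[j]) a * (f^[i]) a = (f^[j]) a * (f^[i]) a * (f^[j]) a) := by
  have key : ∀ i k : ℕ, (⇑f)^[i] a * (⇑f)^[i + (k + 2)] a = (⇑f)^[i + (k + 2)] a * (⇑f)^[i] a := by
    intro i k
    have h1 : (⇑f)^[i + (k + 2)] a = (⇑f)^[i] (f (f ((⇑f)^[k] a))) := by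
      rw [Function.iterate_add_apply]
      congr 1
      rw [show k + 2 = 2 + k by ring, Function.iterate_add_apply]
      rfl
    rw [h1, ← iter_mul, ← iter_mul, hcomm]
  have keyb : ∀ i : ℕ, (⇑f)^[i] a * (⇑f)^[i + 1] a * (⇑f)^[i] a
      = (⇑f)^[i + 1] a * (⇑f)^[i] a * (⇑f)^[i + 1] a := by
    intro i
    have h1 : (⇑f)^[i + 1] a = (⇑f)^[i] (f a) := by
      rw [show i + 1 = i + 1 from rfl, Function.iterate_add_apply]; rfl
    rw [h1, ← iter_mul, ← iter_mul, ← iter_mul, ← iter_mul, hbraid]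
  constructor
  · intro i j h
    rcases h with h | h
    · obtain ⟨k, rfl⟩ : ∃ k, j = i + (k + 2) := ⟨j - i - 2, by omega⟩
      exact key i k
    · obtain ⟨k, rfl⟩ : ∃ k, i = j + (k + 2) := ⟨i - j - 2, by omega⟩
      exact (key j k).symm
  · intro i j h
    rcases h with rfl | rfl
    · exact keyb i
    · exact (keyb j).symm
end

section
/- The infinite braid group B_∞ equipped with the two operations x * y = ∂(x)⁻¹ · σ₁ · ∂(y) · x and x *̄ y = ∂(x)⁻¹ · σ₁⁻¹ · ∂(y) · x is a bi-LD-system: each of the four mixed distributivity laws x ∘₁ (y ∘₂ z) = (x ∘₁ y) ∘₂ (x ∘₁ z) holds for ∘₁, ∘₂ ∈ {*, *̄}. -/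
/-- Relations of the infinite braid group: index `i : ℕ` stands for the generator `σ_{i+1}`. -/
def braidRels : Set (FreeGroup ℕ) :=
  {r | (∃ i j : ℕ, i + 2 ≤ j ∧
          r = FreeGroup.of i * FreeGroup.of j * (FreeGroup.of i)⁻¹ * (FreeGroup.of j)⁻¹) ∨
       (∃ i : ℕ,
          r = FreeGroup.of i * FreeGroup.of (i + 1) * FreeGroup.of i *
              (FreeGroup.of (i + 1) * FreeGroup.of i * FreeGroup.of (i + 1))⁻¹)}

/-- The braid group on infinitely many strands. -/
abbrev BInf : Type := PresentedGroup braidRels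

/-- The generator `σ_{i+1}` of `BInf`. -/
def sigma (i : ℕ) : BInf := PresentedGroup.of i

lemma rel_one {r : FreeGroup ℕ} (hr : r ∈ braidRels) : PresentedGroup.mk braidRels r = 1 :=
  (QuotientGroup.eq_one_iff r).mpr (Subgroup.subset_normalClosure hr)

lemma sigma_comm {i j : ℕ} (h : i + 2 ≤ j) : sigma i * sigma j = sigma j * sigma i := by
  have h1 := rel_one (Or.inl ⟨i, j, h, rfl⟩)
  simp only [map_mul, map_inv] at h1
  rw [mul_inv_eq_one, mul_inv_eq_iff_eq_mul] at h1
  exact h1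

lemma sigma_braid (i : ℕ) :
    sigma i * sigma (i + 1) * sigma i = sigma (i + 1) * sigma i * sigma (i + 1) := by
  have h1 := rel_one (Or.inr ⟨i, rfl⟩)
  simp only [map_mul, map_inv] at h1
  rwa [mul_inv_eq_one] at h1

/-- `σ₁` commutes with everything in the image of `D ∘ D`. -/
lemma comm_DD (D : BInf →* BInf) (hD : ∀ i : ℕ, D (sigma i) = sigma (i + 1)) (w : BInf) :
    sigma 0 * D (D w) = D (D w) * sigma 0 := by
  have : D (D w) ∈ Subgroup.centralizer {sigma 0} := by
    have hmem : w ∈ Subgroup.comap (D.comp D) (Subgroup.centralizer {sigma 0}) := by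
      refine PresentedGroup.generated_by _ _ (fun j => ?_) w
      simp only [Subgroup.mem_comap, MonoidHom.comp_apply]
      intro g hg
      rcases hg with rfl
      show sigma 0 * D (D (sigma j)) = D (D (sigma j)) * sigma 0
      rw [hD j, hD (j + 1)]
      exact sigma_comm (by omega)
    simpa using hmem
  exact this (sigma 0) rfl

/-- Abstract group computation behind all four distributivity laws. -/
lemma aux_calc {G : Type*} [Group G] (a b Da Db A A2 Y1 Y2 Z2 X : G)
    (h1 : a * Y2 = Y2 * a) (h2 : a * Z2 = Z2 * a) (h3 : b * A2 = A2 * b)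
    (hbr : Da * a * Db = b * Da * a) :
    A⁻¹ * a * (Y2⁻¹ * Db * Z2 * Y1) * X =
      (A2⁻¹ * Da * Y2 * A)⁻¹ * b * (A2⁻¹ * Da * Z2 * A) * (A⁻¹ * a * Y1 * X) := by
  have k1 : a * Db = Da⁻¹ * (b * Da * a) := by rw [← hbr]; group
  calc A⁻¹ * a * (Y2⁻¹ * Db * Z2 * Y1) * X
      = A⁻¹ * Y2⁻¹ * (Y2 * a * Y2⁻¹) * Db * Z2 * Y1 * X := by group
    _ = A⁻¹ * Y2⁻¹ * (a * Y2 * Y2⁻¹) * Db * Z2 * Y1 * X := by rw [h1]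
    _ = A⁻¹ * Y2⁻¹ * (a * Db) * Z2 * Y1 * X := by group
    _ = A⁻¹ * Y2⁻¹ * (Da⁻¹ * (b * Da * a)) * Z2 * Y1 * X := by rw [k1]
    _ = A⁻¹ * Y2⁻¹ * Da⁻¹ * b * Da * (a * Z2) * Y1 * X := by group
    _ = A⁻¹ * Y2⁻¹ * Da⁻¹ * b * Da * (Z2 * a) * Y1 * X := by rw [h2]
    _ = A⁻¹ * Y2⁻¹ * Da⁻¹ * (b * A2 * A2⁻¹) * Da * Z2 * a * Y1 * X := by group
    _ = A⁻¹ * Y2⁻¹ * Da⁻¹ * (A2 * b * A2⁻¹) * Da * Z2 * a * Y1 * X := by rw [h3]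
    _ = (A2⁻¹ * Da * Y2 * A)⁻¹ * b * (A2⁻¹ * Da * Z2 * A) * (A⁻¹ * a * Y1 * X) := by group

/-- The distributivity law for a pair of signed operations. -/
lemma aux_law (D : BInf →* BInf)
    (a b : BInf) (hbr : D a * a * D b = b * D a * a)
    (ha : ∀ w, a * D (D w) = D (D w) * a) (hb : ∀ w, b * D (D w) = D (D w) * b)
    (x y z : BInf) :
    (D x)⁻¹ * a * D ((D y)⁻¹ * b * D z * y) * x =
      (D ((D x)⁻¹ * a * D y * x))⁻¹ * b * (D ((D x)⁻¹ * a * D z * x)) *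
        ((D x)⁻¹ * a * D y * x) := by
  have e1 : D ((D y)⁻¹ * b * D z * y) = (D (D y))⁻¹ * D b * D (D z) * D y := by
    simp [map_mul, map_inv]
  have e2 : D ((D x)⁻¹ * a * D y * x) = (D (D x))⁻¹ * D a * D (D y) * D x := by
    simp [map_mul, map_inv]
  have e3 : D ((D x)⁻¹ * a * D z * x) = (D (D x))⁻¹ * D a * D (D z) * D x := by
    simp [map_mul, map_inv]
  rw [e1, e2, e3]
  exact aux_calc a b (D a) (D b) (D x) (D (D x)) (D y) (D (D y)) (D (D z)) x
    (ha y) (ha z) (hb x) hbr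

theorem stmt7 (D : BInf →* BInf) (hD : ∀ i : ℕ, D (sigma i) = sigma (i + 1)) :
    (∀ x y z : BInf,
      (fun x y : BInf => (D x)⁻¹ * sigma 0 * D y * x) x
        ((fun x y : BInf => (D x)⁻¹ * sigma 0 * D y * x) y z) =
      (fun x y : BInf => (D x)⁻¹ * sigma 0 * D y * x)
        ((fun x y : BInf => (D x)⁻¹ * sigma 0 * D y * x) x y)
        ((fun x y : BInf => (D x)⁻¹ * sigma 0 * D y * x) x z)) ∧
    (∀ x y z : BInf,
      (fun x y : BInf => (D x)⁻¹ * sigma 0 * D y * x) x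
        ((fun x y : BInf => (D x)⁻¹ * (sigma 0)⁻¹ * D y * x) y z) =
      (fun x y : BInf => (D x)⁻¹ * (sigma 0)⁻¹ * D y * x)
        ((fun x y : BInf => (D x)⁻¹ * sigma 0 * D y * x) x y)
        ((fun x y : BInf => (D x)⁻¹ * sigma 0 * D y * x) x z)) ∧
    (∀ x y z : BInf,
      (fun x y : BInf => (D x)⁻¹ * (sigma 0)⁻¹ * D y * x) x
        ((fun x y : BInf => (D x)⁻¹ * sigma 0 * D y * x) y z) =
      (fun x y : BInf => (D x)⁻¹ * sigma 0 * D y * x)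
        ((fun x y : BInf => (D x)⁻¹ * (sigma 0)⁻¹ * D y * x) x y)
        ((fun x y : BInf => (D x)⁻¹ * (sigma 0)⁻¹ * D y * x) x z)) ∧
    (∀ x y z : BInf,
      (fun x y : BInf => (D x)⁻¹ * (sigma 0)⁻¹ * D y * x) x
        ((fun x y : BInf => (D x)⁻¹ * (sigma 0)⁻¹ * D y * x) y z) =
      (fun x y : BInf => (D x)⁻¹ * (sigma 0)⁻¹ * D y * x)
        ((fun x y : BInf => (D x)⁻¹ * (sigma 0)⁻¹ * D y * x) x y)
        ((fun x y : BInf => (D x)⁻¹ * (sigma 0)⁻¹ * D y * x) x z)) := by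
  set s : BInf := sigma 0 with hs
  have hDs : D s = sigma 1 := hD 0
  have B : sigma 1 * s * sigma 1 = s * sigma 1 * s := (sigma_braid 0).symm
  have ha : ∀ w, s * D (D w) = D (D w) * s := comm_DD D hD
  have ha' : ∀ w, s⁻¹ * D (D w) = D (D w) * s⁻¹ := fun w => (Commute.inv_left (ha w)).eq
  have hDs' : D s⁻¹ = (sigma 1)⁻¹ := by rw [map_inv, hDs]
  -- the four sign variants of the braid relation
  have hpp : D s * s * D s = s * D s * s := by rw [hDs]; exact B
  have hpm : D s * s * D s⁻¹ = s⁻¹ * D s * s := by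
    rw [hDs, hDs']
    calc sigma 1 * s * (sigma 1)⁻¹ = s⁻¹ * (s * sigma 1 * s) * (sigma 1)⁻¹ := by group
      _ = s⁻¹ * (sigma 1 * s * sigma 1) * (sigma 1)⁻¹ := by rw [B]
      _ = s⁻¹ * sigma 1 * s := by group
  have hmp : D s⁻¹ * s⁻¹ * D s = s * D s⁻¹ * s⁻¹ := by
    rw [hDs', hDs]
    calc (sigma 1)⁻¹ * s⁻¹ * sigma 1
        = (sigma 1)⁻¹ * s⁻¹ * ((sigma 1 * s * sigma 1) * (sigma 1)⁻¹ * s⁻¹) := by group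
      _ = (sigma 1)⁻¹ * s⁻¹ * ((s * sigma 1 * s) * (sigma 1)⁻¹ * s⁻¹) := by rw [B]
      _ = s * (sigma 1)⁻¹ * s⁻¹ := by group
  have hmm : D s⁻¹ * s⁻¹ * D s⁻¹ = s⁻¹ * D s⁻¹ * s⁻¹ := by
    rw [hDs']
    calc (sigma 1)⁻¹ * s⁻¹ * (sigma 1)⁻¹ = (sigma 1 * s * sigma 1)⁻¹ := by group
      _ = (s * sigma 1 * s)⁻¹ := by rw [B]
      _ = s⁻¹ * (sigma 1)⁻¹ * s⁻¹ := by group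
  exact ⟨fun x y z => aux_law D s s hpp ha ha x y z,
    fun x y z => aux_law D s s⁻¹ hpm ha ha' x y z,
    fun x y z => aux_law D s⁻¹ s hmp ha' ha x y z,
    fun x y z => aux_law D s⁻¹ s⁻¹ hmm ha' ha' x y z⟩
end

section
/- In the braid group B_∞, the element τ_{p,p} = δ_{p+1}·∂(δ_{p+1})·...·∂^{p−1}(δ_{p+1}), where δ_{p+1} = σ_p σ_{p−1} ⋯ σ₁, satisfies the braid relation τ_{p,p} · ∂^p(τ_{p,p}) · τ_{p,p} = ∂^p(τ_{p,p}) · τ_{p,p} · ∂^p(τ_{p,p}). -/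
/-- `δ_{p+1} = σ_p σ_{p-1} ⋯ σ_1`. -/
def delta (p : ℕ) : BInf := ((List.range p).reverse.map sigma).prod

/-- `τ_{p,q} = δ_{p+1} · ∂(δ_{p+1}) ⋯ ∂^{q-1}(δ_{p+1})`, for a shift endomorphism `D`. -/
def tau (D : BInf →* BInf) (p q : ℕ) : BInf :=
  ((List.range q).map (fun k => (⇑D)^[k] (delta p))).prod

namespace Stmt8Aux

lemma rel_one {r : FreeGroup ℕ} (h : r ∈ braidRels) :
    PresentedGroup.mk braidRels r = 1 := by
  have : r ∈ Subgroup.normalClosure braidRels := Subgroup.subset_normalClosure h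
  exact (QuotientGroup.eq_one_iff r).mpr this

lemma braid_comm {i j : ℕ} (h : i + 2 ≤ j) : sigma i * sigma j = sigma j * sigma i := by
  have hr : (FreeGroup.of i * FreeGroup.of j * (FreeGroup.of i)⁻¹ * (FreeGroup.of j)⁻¹ :
      FreeGroup ℕ) ∈ braidRels := Or.inl ⟨i, j, h, rfl⟩
  have := rel_one hr
  simp only [map_mul, map_inv] at this
  have h2 : sigma i * sigma j * (sigma i)⁻¹ * (sigma j)⁻¹ = 1 := this
  rw [mul_inv_eq_one, mul_inv_eq_iff_eq_mul] at h2
  exact h2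

lemma braid_rel (i : ℕ) :
    sigma i * sigma (i + 1) * sigma i = sigma (i + 1) * sigma i * sigma (i + 1) := by
  have hr : (FreeGroup.of i * FreeGroup.of (i + 1) * FreeGroup.of i *
      (FreeGroup.of (i + 1) * FreeGroup.of i * FreeGroup.of (i + 1))⁻¹ :
      FreeGroup ℕ) ∈ braidRels := Or.inr ⟨i, rfl⟩
  have := rel_one hr
  simp only [map_mul, map_inv] at this
  have h2 : sigma i * sigma (i + 1) * sigma i *
      (sigma (i + 1) * sigma i * sigma (i + 1))⁻¹ = 1 := this
  rwa [mul_inv_eq_one] at h2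

/-- `σ_{s+p-1} ⋯ σ_{s}` (shifted delta). -/
def deltaS (s p : ℕ) : BInf := ((List.range p).reverse.map (fun i => sigma (s + i))).prod

lemma deltaS_zero (s : ℕ) : deltaS s 0 = 1 := rfl

lemma deltaS_succ (s p : ℕ) : deltaS s (p + 1) = sigma (s + p) * deltaS s p := by
  simp [deltaS, List.range_succ]

/-- shifted tau -/
def tauS (s p q : ℕ) : BInf := ((List.range q).map (fun k => deltaS (s + k) p)).prod

lemma tauS_zero (s p : ℕ) : tauS s p 0 = 1 := rfl

lemma tauS_succ (s p q : ℕ) : tauS s p (q + 1) = tauS s p q * deltaS (s + q) p := by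
  simp [tauS, List.range_succ]

/-- a high generator commutes with a low delta -/
lemma sigma_deltaS_comm {s p j : ℕ} (h : s + p + 1 ≤ j) :
    sigma j * deltaS s p = deltaS s p * sigma j := by
  induction p with
  | zero => simp [deltaS_zero]
  | succ p ih =>
    have h' : s + p + 1 ≤ j := by omega
    have hc : sigma (s + p) * sigma j = sigma j * sigma (s + p) := braid_comm (by omega)
    rw [deltaS_succ, ← mul_assoc, ← hc, mul_assoc, ih h', ← mul_assoc]

/-- disjoint deltas commute -/
lemma deltaS_deltaS_comm {a m b n : ℕ} (h : a + m + 1 ≤ b) :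
    deltaS a m * deltaS b n = deltaS b n * deltaS a m := by
  induction n with
  | zero => simp [deltaS_zero]
  | succ n ih =>
    rw [deltaS_succ]
    have hc : sigma (b + n) * deltaS a m = deltaS a m * sigma (b + n) :=
      sigma_deltaS_comm (by omega)
    rw [mul_assoc, ← ih, ← mul_assoc, ← hc, mul_assoc]

/-- a disjoint low tau commutes with a high delta -/
lemma deltaS_tauS_comm {a m s P q : ℕ} (h : s + q + P ≤ a) :
    tauS s P q * deltaS a m = deltaS a m * tauS s P q := by
  induction q with
  | zero => simp [tauS_zero]
  | succ q ih =>
    rw [tauS_succ]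
    have hc : deltaS (s + q) P * deltaS a m = deltaS a m * deltaS (s + q) P :=
      deltaS_deltaS_comm (by omega)
    rw [mul_assoc, hc, ← mul_assoc, ih (by omega), mul_assoc]

/-- key relation: `σ_{s+i} δ = δ σ_{s+i+1}` for `δ = deltaS s p`, `i + 2 ≤ p`. -/
lemma sigma_deltaS {s i p : ℕ} (h : i + 2 ≤ p) :
    sigma (s + i) * deltaS s p = deltaS s p * sigma (s + i + 1) := by
  induction p with
  | zero => omega
  | succ p ih =>
    rcases Nat.lt_or_ge (i + 2) (p + 1) with hlt | hge
    · -- i + 2 ≤ p, use induction hypothesis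
      have hih := ih (by omega)
      have hc : sigma (s + i) * sigma (s + p) = sigma (s + p) * sigma (s + i) :=
        braid_comm (by omega)
      rw [deltaS_succ, ← mul_assoc, hc, mul_assoc, hih, ← mul_assoc]
    · -- p = i + 1 : base case with braid relation
      have hp : p = i + 1 := by omega
      subst hp
      rw [deltaS_succ, deltaS_succ]
      have hb : sigma (s + i) * sigma (s + (i + 1)) * sigma (s + i) =
          sigma (s + (i + 1)) * sigma (s + i) * sigma (s + (i + 1)) := by
        have := braid_rel (s + i)
        simpa [Nat.add_assoc] using this
      have hc : sigma (s + (i + 1)) * deltaS s i = deltaS s i * sigma (s + (i + 1)) :=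
        sigma_deltaS_comm (s := s) (p := i) (j := s + (i + 1)) (by omega)
      calc sigma (s + i) * (sigma (s + (i + 1)) * (sigma (s + i) * deltaS s i))
          = (sigma (s + i) * sigma (s + (i + 1)) * sigma (s + i)) * deltaS s i := by
            group
        _ = (sigma (s + (i + 1)) * sigma (s + i) * sigma (s + (i + 1))) * deltaS s i := by
            rw [hb]
        _ = sigma (s + (i + 1)) * (sigma (s + i) * (deltaS s i * sigma (s + (i + 1)))) := by
            rw [mul_assoc, mul_assoc, hc]
        _ = sigma (s + (i + 1)) * (sigma (s + i) * deltaS s i) * (sigma (s + i + 1)) := by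
            simp [mul_assoc, Nat.add_assoc]

/-- pushing a generator through `tauS s p q` shifts it by `q`. -/
lemma sigma_tauS {s i p q : ℕ} (h : i + 2 ≤ p) :
    sigma (s + i) * tauS s p q = tauS s p q * sigma (s + i + q) := by
  induction q with
  | zero => simp [tauS_zero]
  | succ q ih =>
    rw [tauS_succ, ← mul_assoc, ih]
    have : sigma (s + q + i) * deltaS (s + q) p = deltaS (s + q) p * sigma (s + q + i + 1) :=
      sigma_deltaS h
    have h1 : s + i + q = s + q + i := by omega
    have h2 : s + q + i + 1 = s + i + (q + 1) := by omega
    rw [mul_assoc, h1, this, ← mul_assoc, h2]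

/-- pushing a whole delta through `tauS s P q` shifts it by `q`. -/
lemma deltaS_tauS {s t p P q : ℕ} (hst : s ≤ t) (h : t + p + 2 ≤ s + P + 1) :
    deltaS t p * tauS s P q = tauS s P q * deltaS (t + q) p := by
  induction p with
  | zero => simp [deltaS_zero]
  | succ p ih =>
    rw [deltaS_succ, mul_assoc, ih (by omega)]
    have hi : t + p = s + (t - s + p) := by omega
    have := sigma_tauS (s := s) (i := t - s + p) (p := P) (q := q) (by omega)
    rw [hi, ← mul_assoc, this]
    have h2 : s + (t - s + p) + q = t + q + p := by omega
    rw [h2, mul_assoc, ← deltaS_succ]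

/-- pushing a whole tau through `tauS s P q` shifts it by `q`. -/
lemma tauS_tauS {s t p r P q : ℕ} (hst : s ≤ t) (h : t + r + p ≤ s + P) :
    tauS t p r * tauS s P q = tauS s P q * tauS (t + q) p r := by
  induction r with
  | zero => simp [tauS_zero]
  | succ r ih =>
    have hdt : deltaS (t + r) p * tauS s P q = tauS s P q * deltaS (t + r + q) p :=
      deltaS_tauS (s := s) (t := t + r) (p := p) (P := P) (q := q) (by omega) (by omega)
    rw [tauS_succ, mul_assoc, hdt, ← mul_assoc, ih (by omega), mul_assoc]
    have h2 : t + r + q = t + q + r := by omega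
    rw [h2, ← tauS_succ]

lemma deltaS_add (s P Q : ℕ) : deltaS s (P + Q) = deltaS (s + P) Q * deltaS s P := by
  induction Q with
  | zero => simp [deltaS_zero]
  | succ Q ih =>
    have h1 : P + (Q + 1) = (P + Q) + 1 := rfl
    rw [h1, deltaS_succ, ih, deltaS_succ, mul_assoc]
    congr 2
    omega

/-- `τ_{P+Q,r} = ∂^P(τ_{Q,r}) · τ_{P,r}` -/
lemma tauS_add (s P Q r : ℕ) : tauS s (P + Q) r = tauS (s + P) Q r * tauS s P r := by
  induction r with
  | zero => simp [tauS_zero]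
  | succ r ih =>
    have hc : tauS s P r * deltaS (s + r + P) Q = deltaS (s + r + P) Q * tauS s P r :=
      deltaS_tauS_comm (by omega)
    have h1 : s + P + r = s + r + P := by omega
    rw [tauS_succ s (P + Q) r, ih, deltaS_add, tauS_succ (s + P) Q r, tauS_succ s P r, h1]
    calc tauS (s + P) Q r * tauS s P r * (deltaS (s + r + P) Q * deltaS (s + r) P)
        = tauS (s + P) Q r * (tauS s P r * deltaS (s + r + P) Q) * deltaS (s + r) P := by
          group
      _ = tauS (s + P) Q r * (deltaS (s + r + P) Q * tauS s P r) * deltaS (s + r) P := by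
          rw [hc]
      _ = tauS (s + P) Q r * deltaS (s + r + P) Q * (tauS s P r * deltaS (s + r) P) := by
          group

/- Connecting `tau D` with `tauS`. -/

lemma D_iter_mul (D : BInf →* BInf) (k : ℕ) (x y : BInf) :
    (⇑D)^[k] (x * y) = (⇑D)^[k] x * (⇑D)^[k] y := by
  induction k generalizing x y with
  | zero => simp
  | succ k ih => rw [Function.iterate_succ_apply, Function.iterate_succ_apply,
      Function.iterate_succ_apply, map_mul, ih]

lemma D_iter_one (D : BInf →* BInf) (k : ℕ) : (⇑D)^[k] (1 : BInf) = 1 := by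
  induction k with
  | zero => simp
  | succ k ih => rw [Function.iterate_succ_apply, map_one, ih]

lemma D_sigma (D : BInf →* BInf) (hD : ∀ i : ℕ, D (sigma i) = sigma (i + 1)) (k i : ℕ) :
    (⇑D)^[k] (sigma i) = sigma (i + k) := by
  induction k generalizing i with
  | zero => simp
  | succ k ih =>
    rw [Function.iterate_succ_apply, hD, ih]
    congr 1
    omega

lemma D_deltaS (D : BInf →* BInf) (hD : ∀ i : ℕ, D (sigma i) = sigma (i + 1)) (k s p : ℕ) :
    (⇑D)^[k] (deltaS s p) = deltaS (s + k) p := by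
  induction p with
  | zero => rw [deltaS_zero, deltaS_zero, D_iter_one]
  | succ p ih =>
    rw [deltaS_succ, deltaS_succ, D_iter_mul, D_sigma D hD, ih]
    have h1 : s + p + k = s + k + p := by omega
    rw [h1]

lemma delta_eq (p : ℕ) : delta p = deltaS 0 p := by
  simp [delta, deltaS]

lemma tau_eq (D : BInf →* BInf) (hD : ∀ i : ℕ, D (sigma i) = sigma (i + 1)) (p q : ℕ) :
    tau D p q = tauS 0 p q := by
  unfold tau tauS
  congr 1
  apply List.map_congr_left
  intro k _
  rw [delta_eq, D_deltaS D hD, Nat.zero_add]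

lemma D_tauS (D : BInf →* BInf) (hD : ∀ i : ℕ, D (sigma i) = sigma (i + 1)) (k s p q : ℕ) :
    (⇑D)^[k] (tauS s p q) = tauS (s + k) p q := by
  induction q with
  | zero => rw [tauS_zero, tauS_zero, D_iter_one]
  | succ q ih =>
    rw [tauS_succ, tauS_succ, D_iter_mul, ih, D_deltaS D hD]
    have h1 : s + q + k = s + k + q := by omega
    rw [h1]

end Stmt8Aux

open Stmt8Aux in
theorem stmt8 (D : BInf →* BInf) (hD : ∀ i : ℕ, D (sigma i) = sigma (i + 1))
    (p : ℕ) (hp : 1 ≤ p) :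
    tau D p p * (⇑D)^[p] (tau D p p) * tau D p p =
      (⇑D)^[p] (tau D p p) * tau D p p * (⇑D)^[p] (tau D p p) := by
  rw [tau_eq D hD, D_tauS D hD]
  set A := tauS 0 p p with hA
  set B := tauS (0 + p) p p with hB
  -- B * A = tauS 0 (2p) p
  have hBA : B * A = tauS 0 (p + p) p := by
    rw [tauS_add 0 p p p, hA, hB]
  -- A * (B * A) = (B * A) * B
  have hkey : A * tauS 0 (p + p) p = tauS 0 (p + p) p * B := by
    have := tauS_tauS (s := 0) (t := 0) (p := p) (r := p) (P := p + p) (q := p)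
      (le_refl 0) (by omega)
    rw [hA, hB]
    simpa using this
  calc A * B * A = A * (B * A) := by group
    _ = tauS 0 (p + p) p * B := by rw [hBA, hkey]
    _ = B * A * B := by rw [← hBA]
end

section
/- Let G be a group and f an idempotent endomorphism of G (f∘f = f). Then both operations x ∘_f y = f(x·y⁻¹)·x and x ∘_f^rev y = x·f(y⁻¹·x) satisfy the left self-distributivity law. -/
theorem stmt12 (G : Type*) [Group G] (f : G →* G) (hf : ∀ x : G, f (f x) = f x) :
    (∀ x y z : G,
      (fun x y : G => f (x * y⁻¹) * x) x ((fun x y : G => f (x * y⁻¹) * x) y z) =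
      (fun x y : G => f (x * y⁻¹) * x) ((fun x y : G => f (x * y⁻¹) * x) x y)
        ((fun x y : G => f (x * y⁻¹) * x) x z)) ∧
    (∀ x y z : G,
      (fun x y : G => x * f (y⁻¹ * x)) x ((fun x y : G => x * f (y⁻¹ * x)) y z) =
      (fun x y : G => x * f (y⁻¹ * x)) ((fun x y : G => x * f (y⁻¹ * x)) x y)
        ((fun x y : G => x * f (y⁻¹ * x)) x z)) := by
  constructor <;> intro x y z <;>
    simp only [map_mul, map_inv, mul_inv_rev, hf, inv_inv] <;> group
end

section
/- Let G be a group and f an endomorphism of G. Define x *_f y = f(x⁻¹·y)·x and x ∘ y = x·y⁻¹·x. Then *_f distributes over ∘: for all x, y, z ∈ G, x *_f (y ∘ z) = (x *_f y) ∘ (x *_f z). In particular, conjugation x * y = x⁻¹yx distributes over ∘. -/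
theorem stmt13 (G : Type*) [Group G] (f : G →* G) :
    (∀ x y z : G,
      (fun x y : G => f (x⁻¹ * y) * x) x ((fun x y : G => x * y⁻¹ * x) y z) =
      (fun x y : G => x * y⁻¹ * x) ((fun x y : G => f (x⁻¹ * y) * x) x y)
        ((fun x y : G => f (x⁻¹ * y) * x) x z)) ∧
    (∀ x y z : G,
      (fun x y : G => x⁻¹ * y * x) x ((fun x y : G => x * y⁻¹ * x) y z) =
      (fun x y : G => x * y⁻¹ * x) ((fun x y : G => x⁻¹ * y * x) x y)
        ((fun x y : G => x⁻¹ * y * x) x z)) := by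
  constructor <;> intro x y z <;> simp only [show ∀ a b c : G, a * (b*c⁻¹*b) = (a*b)*(a*c)⁻¹*(a*b) by intros; group, map_mul, map_inv] <;> group
end

section
/- Let G be a group and f an idempotent endomorphism of G. Define x ∘_f y = f(x·y⁻¹)·x and x ∘ y = x·y⁻¹·x. Then ∘_f distributes over ∘: for all x, y, z ∈ G, x ∘_f (y ∘ z) = (x ∘_f y) ∘ (x ∘_f z). -/
theorem stmt14 (G : Type*) [Group G] (f : G →* G) (hf : ∀ x : G, f (f x) = f x)
    (x y z : G) :
    (fun x y : G => f (x * y⁻¹) * x) x ((fun x y : G => x * y⁻¹ * x) y z) =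
    (fun x y : G => x * y⁻¹ * x) ((fun x y : G => f (x * y⁻¹) * x) x y)
      ((fun x y : G => f (x * y⁻¹) * x) x z) := by
  simp only [map_mul, map_inv, mul_inv_rev, inv_inv]
  group
end
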